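/- Let S be a finite nonempty set, c a cost function, {i,j,k} ∈ binom(S,3), and R ⊆ S such that {i,j} ∈ δ(R) and {i,k} ∈ δ(R). If 2·c_{ijk}^− + 2·c_{ij}^− + 2·c_{ik}^− + c_{jk}^− − Σ_{{p,q,r}∈binom(S,3)} c_{pqr}^+ − Σ_{{p,q}∈binom(S,2)} c_{pq}^+ + min{ Σ_{{p,q}∈binom({i,j,k},2)} c_{pq}·x_{pq} : x ∈ X_{{i,j,k}}, x_{ij}·x_{ik}·x_{jk} = 0 } ≥ Σ_{{p,q,r}∈T_{δ(R)}} c_{pqr}^− + Σ_{{p,q}∈δ(R)} c_{pq}^−, then there exists an optimal solution x* of min_{x∈X_S} φ_c(x) such that x*_{ij}·x*_{ik}·x*_{jk} = 1. -/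

import Mathlib

open Finset

/-- `binom(S,2)`: the set of 2-element subsets (unordered pairs) of the ground set. -/
def pairs (V : Type*) [Fintype V] [DecidableEq V] : Finset (Finset V) :=
  (univ : Finset V).powersetCard 2

/-- `binom(S,3)`: the set of 3-element subsets (unordered triples) of the ground set. -/
def triples (V : Type*) [Fintype V] [DecidableEq V] : Finset (Finset V) :=
  (univ : Finset V).powersetCard 3

/-- The feasible set `X_S`: maps `x : binom(S,2) → {0,1}` satisfying the triangle
inequalities `x_{pq} + x_{qr} - x_{pr} ≤ 1` for all pairwise distinct `p, q, r`. -/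
def feasible {V : Type*} [Fintype V] [DecidableEq V] (x : Finset V → ℝ) : Prop :=
  (∀ e ∈ pairs V, x e = 0 ∨ x e = 1) ∧
    ∀ p q r : V, p ≠ q → q ≠ r → p ≠ r →
      x {p, q} + x {q, r} - x {p, r} ≤ 1

/-- The cubic objective
`φ_c(x) = Σ_{{p,q,r}} c_{pqr} x_{pq} x_{pr} x_{qr} + Σ_{{p,q}} c_{pq} x_{pq} + c_∅`. -/
def obj {V : Type*} [Fintype V] [DecidableEq V] (c x : Finset V → ℝ) : ℝ :=
  ∑ t ∈ triples V, c t * ∏ e ∈ t.powersetCard 2, x e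
    + ∑ e ∈ pairs V, c e * x e + c ∅

/-- `δ(R)`: the pairs having exactly one element in `R`. -/
def cut {V : Type*} [Fintype V] [DecidableEq V] (R : Finset V) : Finset (Finset V) :=
  (pairs V).filter fun e => (e ∩ R).card = 1

/-- `T_{P'}`: the triples having some 2-element subset in `P'`. -/
def Tof {V : Type*} [Fintype V] [DecidableEq V] (P' : Finset (Finset V)) :
    Finset (Finset V) :=
  (triples V).filter fun t => ∃ e ∈ t.powersetCard 2, e ∈ P'

/-- The feasible set `X_T` for a subset `T` of the ground set: maps
`x : binom(T,2) → {0,1}` satisfying the triangle inequalities within `T`. -/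
def feasibleOn {V : Type*} [DecidableEq V] (T : Finset V) (x : Finset V → ℝ) : Prop :=
  (∀ e ∈ T.powersetCard 2, x e = 0 ∨ x e = 1) ∧
    ∀ p ∈ T, ∀ q ∈ T, ∀ r ∈ T, p ≠ q → q ≠ r → p ≠ r →
      x {p, q} + x {q, r} - x {p, r} ≤ 1

/- ----------------- auxiliary lemmas ----------------- -/

lemma aux_mem_pairs_iff {V : Type*} [Fintype V] [DecidableEq V] {e : Finset V} :
    e ∈ pairs V ↔ e.card = 2 := by
  simp [pairs, Finset.mem_powersetCard]

lemma aux_pair_mem_pairs {V : Type*} [Fintype V] [DecidableEq V] {p q : V} (h : p ≠ q) :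
    ({p, q} : Finset V) ∈ pairs V := by
  rw [aux_mem_pairs_iff, Finset.card_pair h]

lemma aux_triple_mem_triples {V : Type*} [Fintype V] [DecidableEq V] {i j k : V}
    (hij : i ≠ j) (hik : i ≠ k) (hjk : j ≠ k) : ({i, j, k} : Finset V) ∈ triples V := by
  simp [triples, Finset.mem_powersetCard, Finset.card_insert_of_notMem,
    Finset.mem_insert, hij, hik, hjk]

lemma aux_powersetCard_two_triple {V : Type*} [DecidableEq V] {i j k : V}
    (hij : i ≠ j) (hik : i ≠ k) (hjk : j ≠ k) :
    ({i, j, k} : Finset V).powersetCard 2 =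
      ({({i, j} : Finset V), {i, k}, {j, k}} : Finset (Finset V)) := by
  ext s
  simp only [Finset.mem_powersetCard, Finset.mem_insert, Finset.mem_singleton]
  constructor
  · rintro ⟨hs, hc⟩
    obtain ⟨a, b, hab, rfl⟩ := Finset.card_eq_two.mp hc
    have ha := hs (by simp : a ∈ ({a, b} : Finset V))
    have hb := hs (by simp : b ∈ ({a, b} : Finset V))
    simp only [Finset.mem_insert, Finset.mem_singleton] at ha hb
    rcases ha with rfl | rfl | rfl <;> rcases hb with rfl | rfl | rfl <;>
      simp_all [Finset.pair_comm]
  · rintro (rfl | rfl | rfl) <;>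
      refine ⟨?_, Finset.card_pair (by assumption)⟩ <;>
      intro a ha <;> simp only [Finset.mem_insert, Finset.mem_singleton] at ha ⊢ <;> tauto

lemma aux_sum3 {α β : Type*} [DecidableEq α] [AddCommMonoid β] {A B C : α} (f : α → β)
    (h1 : A ≠ B) (h2 : A ≠ C) (h3 : B ≠ C) :
    ∑ e ∈ ({A, B, C} : Finset α), f e = f A + (f B + f C) := by
  rw [Finset.sum_insert (by simp [h1, h2]), Finset.sum_insert (by simp [h3]),
    Finset.sum_singleton]

lemma aux_prod3 {α : Type*} [DecidableEq α] {A B C : α} (f : α → ℝ)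
    (h1 : A ≠ B) (h2 : A ≠ C) (h3 : B ≠ C) :
    ∏ e ∈ ({A, B, C} : Finset α), f e = f A * (f B * f C) := by
  rw [Finset.prod_insert (by simp [h1, h2]), Finset.prod_insert (by simp [h3]),
    Finset.prod_singleton]

lemma aux_prod_mem01 {α : Type*} {s : Finset α} {f : α → ℝ}
    (h : ∀ a ∈ s, f a = 0 ∨ f a = 1) :
    (∏ a ∈ s, f a) = 0 ∨ (∏ a ∈ s, f a) = 1 := by
  classical
  induction s using Finset.induction_on with
  | empty => right; simp
  | insert a s hnm ih =>
    rw [Finset.prod_insert hnm]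
    rcases h a (Finset.mem_insert_self _ _) with h0 | h1
    · left; rw [h0]; ring
    · rcases ih (fun b hb => h b (Finset.mem_insert_of_mem hb)) with h' | h' <;>
        simp [h1, h']

lemma aux_all_one_of_prod_one {α : Type*} {s : Finset α} {f : α → ℝ}
    (h : ∀ a ∈ s, f a = 0 ∨ f a = 1) (hp : (∏ a ∈ s, f a) = 1) :
    ∀ a ∈ s, f a = 1 := by
  intro a ha
  rcases h a ha with h0 | h1
  · exfalso
    have := Finset.prod_eq_zero ha h0
    rw [hp] at this; norm_num at this
  · exact h1

lemma aux_pm (r : ℝ) : max r 0 - max (-r) 0 = r := by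
  rcases le_total r 0 with h | h
  · rw [max_eq_right h, max_eq_left (by linarith)]; ring
  · rw [max_eq_left h, max_eq_right (by linarith)]; ring

lemma aux_obj_congr {V : Type*} [Fintype V] [DecidableEq V] (c : Finset V → ℝ)
    {x y : Finset V → ℝ} (hxy : ∀ e ∈ pairs V, x e = y e) : obj c x = obj c y := by
  unfold obj
  congr 1
  · congr 1
    · apply Finset.sum_congr rfl
      intro t ht
      congr 1
      apply Finset.prod_congr rfl
      intro e he
      apply hxy
      rw [aux_mem_pairs_iff]
      exact (Finset.mem_powersetCard.mp he).2
    · apply Finset.sum_congr rfl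
      intro e he
      rw [hxy e he]

/-- Existence of a 0/1-valued optimal solution. -/
lemma aux_exists_optimal {V : Type*} [Fintype V] [DecidableEq V] (c : Finset V → ℝ) :
    ∃ xb : Finset V → ℝ, feasible xb ∧ (∀ e, xb e = 0 ∨ xb e = 1) ∧
      ∀ x, feasible x → obj c xb ≤ obj c x := by
  classical
  set ind : Finset (Finset V) → Finset V → ℝ :=
    fun P e => if e ∈ P then 1 else 0 with hind
  have hind01 : ∀ P e, ind P e = 0 ∨ ind P e = 1 := by
    intro P e
    by_cases h : e ∈ P <;> simp [hind, h]
  have key : ∀ x : Finset V → ℝ, feasible x →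
      ∃ P ∈ (pairs V).powerset, feasible (ind P) ∧ obj c (ind P) = obj c x := by
    intro x hx
    refine ⟨(pairs V).filter (fun e => x e = 1),
      Finset.mem_powerset.mpr (Finset.filter_subset _ _), ?_, ?_⟩
    · have hval : ∀ p q : V, p ≠ q → ind ((pairs V).filter (fun e => x e = 1)) {p, q}
          = x {p, q} := by
        intro p q hpq
        have hm := aux_pair_mem_pairs hpq
        rcases hx.1 _ hm with h0 | h1
        · simp [hind, Finset.mem_filter, hm, h0]
        · simp [hind, Finset.mem_filter, hm, h1]
      refine ⟨fun e _ => hind01 _ e, fun p q r hpq hqr hpr => ?_⟩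
      rw [hval p q hpq, hval q r hqr, hval p r hpr]
      exact hx.2 p q r hpq hqr hpr
    · apply aux_obj_congr
      intro e he
      rcases hx.1 e he with h0 | h1
      · simp [hind, Finset.mem_filter, he, h0]
      · simp [hind, Finset.mem_filter, he, h1]
  set F : Finset (Finset (Finset V)) :=
    ((pairs V).powerset).filter (fun P => feasible (ind P)) with hF
  have hF0 : ∅ ∈ F := by
    rw [hF, Finset.mem_filter]
    refine ⟨Finset.empty_mem_powerset _, ?_, ?_⟩
    · intro e _; left; simp [hind]
    · intro p q r _ _ _; simp [hind]
  obtain ⟨P0, hP0, hmin⟩ := F.exists_min_image (fun P => obj c (ind P)) ⟨∅, hF0⟩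
  have hP0feas : feasible (ind P0) := (Finset.mem_filter.mp hP0).2
  refine ⟨ind P0, hP0feas, fun e => hind01 _ e, ?_⟩
  intro x hx
  obtain ⟨P, hPpow, hPfeas, heq⟩ := key x hx
  have hPF : P ∈ F := by
    rw [hF, Finset.mem_filter]
    exact ⟨hPpow, hPfeas⟩
  calc obj c (ind P0) ≤ obj c (ind P) := hmin P hPF
    _ = obj c x := heq

set_option maxHeartbeats 1000000 in
theorem triplet_join_persistency {V : Type*} [Fintype V] [DecidableEq V] [Nonempty V]
    (c : Finset V → ℝ) (i j k : V) (hij : i ≠ j) (hik : i ≠ k) (hjk : j ≠ k)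
    (R : Finset V)
    (hR1 : ({i, j} : Finset V) ∈ cut R) (hR2 : ({i, k} : Finset V) ∈ cut R)
    (h : ∀ x : Finset V → ℝ, feasibleOn {i, j, k} x →
        x {i, j} * x {i, k} * x {j, k} = 0 →
        2 * max (-(c {i, j, k})) 0 + 2 * max (-(c {i, j})) 0 + 2 * max (-(c {i, k})) 0
          + max (-(c {j, k})) 0
          - ∑ t ∈ triples V, max (c t) 0 - ∑ e ∈ pairs V, max (c e) 0
          + ∑ e ∈ ({i, j, k} : Finset V).powersetCard 2, c e * x e
        ≥ ∑ t ∈ Tof (cut R), max (-(c t)) 0 + ∑ e ∈ cut R, max (-(c e)) 0) :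
    ∃ xstar : Finset V → ℝ, feasible xstar ∧
      (∀ x : Finset V → ℝ, feasible x → obj c xstar ≤ obj c x) ∧
      xstar {i, j} * xstar {i, k} * xstar {j, k} = 1 := by
  classical
  obtain ⟨xb, hxbfeas, hxb01, hxbopt⟩ := aux_exists_optimal c
  -- pair distinctness
  have hne1 : ({i, j} : Finset V) ≠ {i, k} := by
    intro he
    have : j ∈ ({i, k} : Finset V) := he ▸ (by simp)
    simp only [Finset.mem_insert, Finset.mem_singleton] at this
    rcases this with h' | h' <;> [exact hij h'.symm; exact hjk h']
  have hne2 : ({i, j} : Finset V) ≠ {j, k} := by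
    intro he
    have : i ∈ ({j, k} : Finset V) := he ▸ (by simp)
    simp only [Finset.mem_insert, Finset.mem_singleton] at this
    rcases this with h' | h' <;> [exact hij h'; exact hik h']
  have hne3 : ({i, k} : Finset V) ≠ {j, k} := by
    intro he
    have : i ∈ ({j, k} : Finset V) := he ▸ (by simp)
    simp only [Finset.mem_insert, Finset.mem_singleton] at this
    rcases this with h' | h' <;> [exact hij h'; exact hik h']
  have hpc : ({i, j, k} : Finset V).powersetCard 2 =
      ({({i, j} : Finset V), {i, k}, {j, k}} : Finset (Finset V)) :=
    aux_powersetCard_two_triple hij hik hjk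
  have htriT : ({i, j, k} : Finset V) ∈ triples V := aux_triple_mem_triples hij hik hjk
  by_cases hP : xb {i, j} * xb {i, k} * xb {j, k} = 1
  · exact ⟨xb, hxbfeas, hxbopt, hP⟩
  -- otherwise the product is 0
  have hprod0 : xb {i, j} * xb {i, k} * xb {j, k} = 0 := by
    rcases hxb01 {i, j} with h1 | h1
    · rw [h1]; ring
    · rcases hxb01 {i, k} with h2 | h2
      · rw [h2]; ring
      · rcases hxb01 {j, k} with h3 | h3
        · rw [h3]; ring
        · exact absurd (by rw [h1, h2, h3]; norm_num) hP
  -- transitivity of xb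
  have htrans : ∀ p q r : V, p ≠ q → q ≠ r → p ≠ r →
      xb {p, q} = 1 → xb {q, r} = 1 → xb {p, r} = 1 := by
    intro p q r hpq hqr hpr h1 h2
    have hineq := hxbfeas.2 p q r hpq hqr hpr
    rcases hxb01 {p, r} with h3 | h3
    · rw [h1, h2, h3] at hineq; norm_num at hineq
    · exact h3
  -- the merged cluster predicate
  set D : V → Prop := fun p =>
    p = i ∨ p = j ∨ p = k ∨ xb {p, i} = 1 ∨ xb {p, j} = 1 ∨ xb {p, k} = 1 with hD
  have hDi : D i := Or.inl rfl
  have hDj : D j := Or.inr (Or.inl rfl)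
  have hDk : D k := Or.inr (Or.inr (Or.inl rfl))
  -- closure of D under xb-adjacency
  have hDcl : ∀ p q : V, p ≠ q → xb {p, q} = 1 → D q → D p := by
    intro p q hpq h1 hq
    have hq' : q = i ∨ q = j ∨ q = k ∨ xb {q, i} = 1 ∨ xb {q, j} = 1 ∨ xb {q, k} = 1 := hq
    have step : ∀ a : V, (q = a ∨ xb {q, a} = 1) → (p = a ∨ xb {p, a} = 1) := by
      intro a ha
      by_cases hpa : p = a
      · exact Or.inl hpa
      · right
        rcases ha with rfl | ha
        · exact h1
        · by_cases hqa : q = a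
          · subst hqa; exact h1
          · exact htrans p q a hpq hqa hpa h1 ha
    rcases hq' with hq2 | hq2 | hq2 | hq2 | hq2 | hq2
    · rcases step i (Or.inl hq2) with h' | h'
      · exact Or.inl h'
      · exact Or.inr (Or.inr (Or.inr (Or.inl h')))
    · rcases step j (Or.inl hq2) with h' | h'
      · exact Or.inr (Or.inl h')
      · exact Or.inr (Or.inr (Or.inr (Or.inr (Or.inl h'))))
    · rcases step k (Or.inl hq2) with h' | h'
      · exact Or.inr (Or.inr (Or.inl h'))
      · exact Or.inr (Or.inr (Or.inr (Or.inr (Or.inr h'))))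
    · rcases step i (Or.inr hq2) with h' | h'
      · exact Or.inl h'
      · exact Or.inr (Or.inr (Or.inr (Or.inl h')))
    · rcases step j (Or.inr hq2) with h' | h'
      · exact Or.inr (Or.inl h')
      · exact Or.inr (Or.inr (Or.inr (Or.inr (Or.inl h'))))
    · rcases step k (Or.inr hq2) with h' | h'
      · exact Or.inr (Or.inr (Or.inl h'))
      · exact Or.inr (Or.inr (Or.inr (Or.inr (Or.inr h'))))
  -- the merged solution
  set xs : Finset V → ℝ :=
    fun e => if xb e = 1 ∨ (∀ p ∈ e, D p) then 1 else 0 with hxs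
  have hxs01 : ∀ e, xs e = 0 ∨ xs e = 1 := by
    intro e
    by_cases h' : xb e = 1 ∨ (∀ p ∈ e, D p)
    · right; simp [hxs, h']
    · left; simp [hxs, h']
  have hxs_of_xb : ∀ e, xb e = 1 → xs e = 1 := by
    intro e h'
    simp [hxs, h']
  have hxsD : ∀ p q : V, D p → D q → xs {p, q} = 1 := by
    intro p q hp hq
    rw [hxs]
    refine if_pos (Or.inr ?_)
    intro a ha
    simp only [Finset.mem_insert, Finset.mem_singleton] at ha
    rcases ha with rfl | rfl
    · exact hp
    · exact hq
  have hxs_cond : ∀ p q : V, xs {p, q} = 1 →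
      xb {p, q} = 1 ∨ (D p ∧ D q) := by
    intro p q h'
    by_cases hc : xb {p, q} = 1 ∨ (∀ a ∈ ({p, q} : Finset V), D a)
    · rcases hc with hc | hc
      · exact Or.inl hc
      · exact Or.inr ⟨hc p (by simp), hc q (by simp)⟩
    · exfalso
      have h0 : xs {p, q} = 0 := by simp only [hxs]; rw [if_neg hc]
      rw [h0] at h'; norm_num at h'
  have hstar_trans : ∀ p q r : V, p ≠ q → q ≠ r → p ≠ r →
      xs {p, q} = 1 → xs {q, r} = 1 → xs {p, r} = 1 := by
    intro p q r hpq hqr hpr h1 h2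
    rcases hxs_cond p q h1 with hc1 | hc1 <;> rcases hxs_cond q r h2 with hc2 | hc2
    · exact hxs_of_xb _ (htrans p q r hpq hqr hpr hc1 hc2)
    · have hp : D p := hDcl p q hpq hc1 hc2.1
      exact hxsD p r hp hc2.2
    · have hr : D r := hDcl r q hqr.symm (by rw [Finset.pair_comm]; exact hc2) hc1.2
      exact hxsD p r hc1.1 hr
    · exact hxsD p r hc1.1 hc2.2
  have hxsfeas : feasible xs := by
    refine ⟨fun e _ => hxs01 e, ?_⟩
    intro p q r hpq hqr hpr
    by_cases h1 : xs {p, q} = 1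
    · by_cases h2 : xs {q, r} = 1
      · have h3 := hstar_trans p q r hpq hqr hpr h1 h2
        rw [h1, h2, h3]; norm_num
      · have h2' : xs {q, r} = 0 := (hxs01 _).resolve_right h2
        rcases hxs01 {p, r} with h3 | h3 <;> rw [h1, h2', h3] <;> norm_num
    · have h1' : xs {p, q} = 0 := (hxs01 _).resolve_right h1
      rcases hxs01 {q, r} with h2 | h2 <;> rcases hxs01 {p, r} with h3 | h3 <;>
        rw [h1', h2, h3] <;> norm_num
  have hxsijk : xs {i, j} * xs {i, k} * xs {j, k} = 1 := by
    rw [hxsD i j hDi hDj, hxsD i k hDi hDk, hxsD j k hDj hDk]; norm_num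
  -- it remains to show optimality of xs
  refine ⟨xs, hxsfeas, ?_, hxsijk⟩
  have hkey : obj c xs ≤ obj c xb := by
    -- step A : triple sums
    set g : Finset V → ℝ :=
      fun t => if t = ({i, j, k} : Finset V) then c {i, j, k} else max (c t) 0 with hg
    have hgT : g ({i, j, k} : Finset V) = c {i, j, k} := by simp [hg]
    have hgne : ∀ t : Finset V, t ≠ ({i, j, k} : Finset V) → g t = max (c t) 0 := by
      intro t ht; simp [hg, ht]
    have hptA : ∀ t ∈ triples V,
        c t * ∏ e ∈ t.powersetCard 2, xs e ≤ c t * ∏ e ∈ t.powersetCard 2, xb e + g t := by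
      intro t ht
      have hb01 := aux_prod_mem01 (fun e _ => hxb01 e) (s := t.powersetCard 2)
      have hs01 := aux_prod_mem01 (fun e _ => hxs01 e) (s := t.powersetCard 2)
      by_cases hteq : t = ({i, j, k} : Finset V)
      · subst hteq
        rw [hpc, aux_prod3 xb hne1 hne2 hne3, aux_prod3 xs hne1 hne2 hne3,
          hxsD i j hDi hDj, hxsD i k hDi hDk, hxsD j k hDj hDk]
        have hb0 : xb {i, j} * (xb {i, k} * xb {j, k}) = 0 := by
          rw [← mul_assoc]; exact hprod0
        rw [hb0, hgT]
        norm_num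
      · rw [hgne t hteq]
        rcases hb01 with hb | hb
        · rw [hb]
          rcases hs01 with hs | hs
          · rw [hs]
            have := le_max_right (c t) 0
            linarith
          · rw [hs]
            have := le_max_left (c t) 0
            linarith
        · have hall := aux_all_one_of_prod_one (fun e _ => hxb01 e) hb
          have hps : ∏ e ∈ t.powersetCard 2, xs e = 1 :=
            Finset.prod_eq_one (fun e he => hxs_of_xb e (hall e he))
          rw [hb, hps]
          have := le_max_right (c t) 0
          linarith
    have hgsum : ∑ t ∈ triples V, g t =
        c {i, j, k} + (∑ t ∈ triples V, max (c t) 0 - max (c {i, j, k}) 0) := by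
      have hMT : ∑ t ∈ (triples V).erase {i, j, k}, max (c t) 0 + max (c {i, j, k}) 0
          = ∑ t ∈ triples V, max (c t) 0 := Finset.sum_erase_add _ _ htriT
      have h1 : ∑ t ∈ (triples V).erase {i, j, k}, g t =
          ∑ t ∈ (triples V).erase {i, j, k}, max (c t) 0 :=
        Finset.sum_congr rfl (fun t ht => hgne t (Finset.ne_of_mem_erase ht))
      rw [← Finset.sum_erase_add _ g htriT, h1, hgT, ← hMT]
      ring
    have hA : ∑ t ∈ triples V, c t * ∏ e ∈ t.powersetCard 2, xs e ≤
        ∑ t ∈ triples V, c t * ∏ e ∈ t.powersetCard 2, xb e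
          + (c {i, j, k} + (∑ t ∈ triples V, max (c t) 0 - max (c {i, j, k}) 0)) := by
      calc ∑ t ∈ triples V, c t * ∏ e ∈ t.powersetCard 2, xs e
          ≤ ∑ t ∈ triples V, (c t * ∏ e ∈ t.powersetCard 2, xb e + g t) :=
            Finset.sum_le_sum hptA
        _ = ∑ t ∈ triples V, c t * ∏ e ∈ t.powersetCard 2, xb e + ∑ t ∈ triples V, g t :=
            Finset.sum_add_distrib
        _ = _ := by rw [hgsum]
    -- step B : pair sums
    set tri : Finset (Finset V) := {({i, j} : Finset V), {i, k}, {j, k}} with htri_def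
    have hsubtri : tri ⊆ pairs V := by
      intro e he
      rw [htri_def] at he
      simp only [Finset.mem_insert, Finset.mem_singleton] at he
      rcases he with rfl | rfl | rfl
      · exact aux_pair_mem_pairs hij
      · exact aux_pair_mem_pairs hik
      · exact aux_pair_mem_pairs hjk
    set ge : Finset V → ℝ :=
      fun e => if e ∈ tri then c e * (1 - xb e) else max (c e) 0 with hge
    have hgeT : ∀ e ∈ tri, ge e = c e * (1 - xb e) := by
      intro e he; simp [hge, he]
    have hgene : ∀ e ∉ tri, ge e = max (c e) 0 := by
      intro e he; simp [hge, he]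
    have hptB : ∀ e ∈ pairs V, c e * xs e ≤ c e * xb e + ge e := by
      intro e he
      by_cases hetri : e ∈ tri
      · have hxs1 : xs e = 1 := by
          rw [htri_def] at hetri
          simp only [Finset.mem_insert, Finset.mem_singleton] at hetri
          rcases hetri with rfl | rfl | rfl
          · exact hxsD i j hDi hDj
          · exact hxsD i k hDi hDk
          · exact hxsD j k hDj hDk
        rw [hxs1, hgeT e hetri]
        exact le_of_eq (by ring)
      · rw [hgene e hetri]
        rcases hxb01 e with hb | hb
        · rcases hxs01 e with hs | hs
          · rw [hb, hs]
            have := le_max_right (c e) 0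
            linarith
          · rw [hb, hs]
            have := le_max_left (c e) 0
            linarith
        · rw [hb, hxs_of_xb e hb]
          have := le_max_right (c e) 0
          linarith
    have hgesum : ∑ e ∈ pairs V, ge e =
        (∑ e ∈ pairs V, max (c e) 0
          - (max (c {i, j}) 0 + (max (c {i, k}) 0 + max (c {j, k}) 0)))
        + ((c {i, j} - c {i, j} * xb {i, j}) + ((c {i, k} - c {i, k} * xb {i, k})
          + (c {j, k} - c {j, k} * xb {j, k}))) := by
      have hsd1 : ∑ e ∈ pairs V \ tri, ge e + ∑ e ∈ tri, ge e = ∑ e ∈ pairs V, ge e :=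
        Finset.sum_sdiff hsubtri
      have hsd2 : ∑ e ∈ pairs V \ tri, max (c e) 0 + ∑ e ∈ tri, max (c e) 0
          = ∑ e ∈ pairs V, max (c e) 0 := Finset.sum_sdiff hsubtri
      have he1 : ∑ e ∈ pairs V \ tri, ge e = ∑ e ∈ pairs V \ tri, max (c e) 0 :=
        Finset.sum_congr rfl (fun e he => hgene e (Finset.mem_sdiff.mp he).2)
      have he2 : ∑ e ∈ tri, ge e = c {i, j} * (1 - xb {i, j})
          + (c {i, k} * (1 - xb {i, k}) + c {j, k} * (1 - xb {j, k})) := by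
        rw [Finset.sum_congr rfl (fun e he => hgeT e he), htri_def,
          aux_sum3 (fun e => c e * (1 - xb e)) hne1 hne2 hne3]
      have he3 : ∑ e ∈ tri, max (c e) 0 = max (c {i, j}) 0
          + (max (c {i, k}) 0 + max (c {j, k}) 0) := by
        rw [htri_def, aux_sum3 (fun e => max (c e) 0) hne1 hne2 hne3]
      linarith [hsd1, hsd2, he1, he2, he3]
    have hB : ∑ e ∈ pairs V, c e * xs e ≤ ∑ e ∈ pairs V, c e * xb e
        + ((∑ e ∈ pairs V, max (c e) 0
          - (max (c {i, j}) 0 + (max (c {i, k}) 0 + max (c {j, k}) 0)))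
        + ((c {i, j} - c {i, j} * xb {i, j}) + ((c {i, k} - c {i, k} * xb {i, k})
          + (c {j, k} - c {j, k} * xb {j, k})))) := by
      calc ∑ e ∈ pairs V, c e * xs e
          ≤ ∑ e ∈ pairs V, (c e * xb e + ge e) := Finset.sum_le_sum hptB
        _ = ∑ e ∈ pairs V, c e * xb e + ∑ e ∈ pairs V, ge e := Finset.sum_add_distrib
        _ = _ := by rw [hgesum]
    -- step C : apply h to xb
    have hfeasOn : feasibleOn ({i, j, k} : Finset V) xb :=
      ⟨fun e _ => hxb01 e, fun p _ q _ r _ hpq hqr hpr => hxbfeas.2 p q r hpq hqr hpr⟩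
    have hh := h xb hfeasOn hprod0
    have hsumxb : ∑ e ∈ ({i, j, k} : Finset V).powersetCard 2, c e * xb e
        = c {i, j} * xb {i, j} + (c {i, k} * xb {i, k} + c {j, k} * xb {j, k}) := by
      rw [hpc, htri_def, aux_sum3 (fun e => c e * xb e) hne1 hne2 hne3]
    rw [hsumxb] at hh
    -- step D : lower bound on the right-hand side of h
    have hTofmem : ({i, j, k} : Finset V) ∈ Tof (cut R) := by
      rw [Tof, Finset.mem_filter]
      exact ⟨htriT, ⟨{i, j}, by rw [hpc, htri_def]; simp, hR1⟩⟩
    have hD1 : max (-(c {i, j, k})) 0 ≤ ∑ t ∈ Tof (cut R), max (-(c t)) 0 :=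
      Finset.single_le_sum (f := fun t => max (-(c t)) 0)
        (fun t _ => le_max_right _ 0) hTofmem
    have hD2 : max (-(c {i, j})) 0 + max (-(c {i, k})) 0 ≤ ∑ e ∈ cut R, max (-(c e)) 0 := by
      have hsub : ({({i, j} : Finset V), {i, k}} : Finset (Finset V)) ⊆ cut R := by
        intro e he
        simp only [Finset.mem_insert, Finset.mem_singleton] at he
        rcases he with rfl | rfl
        · exact hR1
        · exact hR2
      have := Finset.sum_le_sum_of_subset_of_nonneg hsub
        (fun e _ _ => le_max_right (-(c e)) 0)
      rwa [Finset.sum_insert (by simp [hne1]), Finset.sum_singleton] at this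
    -- final arithmetic
    have e1 := aux_pm (c {i, j, k})
    have e2 := aux_pm (c {i, j})
    have e3 := aux_pm (c {i, k})
    have e4 := aux_pm (c {j, k})
    rw [obj, obj]
    linarith [hA, hB, hh, hD1, hD2, e1, e2, e3, e4]
  intro x hx
  exact le_trans hkey (hxbopt x hx)
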